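/- Let (M_p) satisfy M_0 = 1 and logarithmic convexity, with associated function M(t) = sup_p log(t^p/M_p), t > 0. Suppose ∑_p M_{p-1}/M_p < ∞ (non-quasi-analyticity (M.3)'). Then ∫_Γ |dλ|/|λ|² over any curve Γ contained in {λ : |λ| ≥ 1} of the form Γ = {α M(l|y|) + β + iy : y ∈ ℝ} (with α, β, l > 0) is finite. -/

import Mathlib

open MeasureTheory Complex Filter Topology

lemma mono_deriv_integrable {f : ℝ → ℝ} (hf : Monotone f) {a b : ℝ}
    (h1 : ∀ x, a ≤ f x) (h2 : ∀ x, f x ≤ b) :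
    Integrable (deriv f) := by
  set sf := hf.stieltjesFunction with hsf
  have hb1 : ∀ x, a ≤ sf x := fun x => by
    rw [hsf, hf.stieltjesFunction_eq]
    exact le_trans (h1 x) (hf.le_rightLim le_rfl)
  have hb2 : ∀ x, sf x ≤ b := fun x => by
    rw [hsf, hf.stieltjesFunction_eq]
    exact le_trans (hf.rightLim_le (lt_add_one x)) (h2 (x+1))
  have hA : BddAbove (Set.range (sf : ℝ → ℝ)) := ⟨b, by rintro _ ⟨x, rfl⟩; exact hb2 x⟩
  have hB : BddBelow (Set.range (sf : ℝ → ℝ)) := ⟨a, by rintro _ ⟨x, rfl⟩; exact hb1 x⟩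
  have hT : Tendsto (sf : ℝ → ℝ) atTop (𝓝 (⨆ x, sf x)) := tendsto_atTop_ciSup sf.mono hA
  have hBo : Tendsto (sf : ℝ → ℝ) atBot (𝓝 (⨅ x, sf x)) := tendsto_atBot_ciInf sf.mono hB
  have : IsFiniteMeasure sf.measure := sf.isFiniteMeasure hBo hT
  have key : Integrable (fun x => (Measure.rnDeriv sf.measure volume x).toReal) :=
    Measure.integrable_toReal_rnDeriv
  exact key.congr (by filter_upwards [hf.ae_hasDerivAt] with x hx using hx.deriv.symm)

/-- The integral `∫_Γ |dλ|/|λ|²` along the boundary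
`Γ = {α M(l|y|) + β + iy : y ∈ ℝ}` of an ultra-logarithmic region contained in
`{|λ| ≥ 1}` is finite, where `M` is the associated function of a non-quasi-analytic
log-convex sequence and `|dλ| = √(1 + g'(y)²) dy` with `g(y) = α M(l|y|) + β`. -/
theorem arc_length_integral_finite (M : ℕ → ℝ) (hMpos : ∀ p, 0 < M p) (hM0 : M 0 = 1)
    (hlogconv : ∀ p : ℕ, 1 ≤ p → M p ^ 2 ≤ M (p - 1) * M (p + 1))
    (hnqa : Summable (fun p : ℕ => M p / M (p + 1)))
    (α β l : ℝ) (hα : 0 < α) (hβ : 0 < β) (hl : 0 < l)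
    (g : ℝ → ℝ)
    (hg : g = fun y : ℝ => α * (⨆ p : ℕ, Real.log ((l * |y|) ^ p / M p)) + β)
    (hΓ : ∀ y : ℝ, 1 ≤ ‖((g y : ℂ) + Complex.I * y)‖) :
    Integrable (fun y : ℝ =>
      Real.sqrt (1 + deriv g y ^ 2) / ‖((g y : ℂ) + Complex.I * y)‖ ^ 2) := by
  -- boundedness of t^p / M p in p, for fixed t ≥ 0
  have hbdd : ∀ t : ℝ, 0 ≤ t → ∃ B : ℝ, ∀ p : ℕ, t ^ p / M p ≤ B := by
    intro t ht
    have h0 : (0:ℝ) < 1/(t+1) := by positivity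
    obtain ⟨P, hP⟩ := eventually_atTop.mp
      (hnqa.tendsto_atTop_zero.eventually (gt_mem_nhds h0))
    have hstep : ∀ p, P ≤ p → t ^ p / M p ≤ t ^ P / M P := by
      intro p hp
      induction p, hp using Nat.le_induction with
      | base => exact le_rfl
      | succ p hp ih =>
        refine le_trans ?_ ih
        have h1 : M p / M (p+1) < 1/(t+1) := hP p hp
        have h2 : M p * (t+1) < 1 * M (p+1) :=
          (div_lt_div_iff₀ (hMpos (p+1)) (by positivity)).1 h1
        have h3 : t * M p ≤ M (p+1) := by nlinarith [hMpos p]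
        rw [div_le_div_iff₀ (hMpos (p+1)) (hMpos p)]
        calc t ^ (p+1) * M p = t ^ p * (t * M p) := by ring
          _ ≤ t ^ p * M (p+1) := by
              exact mul_le_mul_of_nonneg_left h3 (by positivity)
    refine ⟨∑ k ∈ Finset.range (P+1), t ^ k / M k, fun p => ?_⟩
    have hterm : ∀ k ∈ Finset.range (P+1), (0:ℝ) ≤ t ^ k / M k := fun k _ => by
      have := hMpos k; positivity
    rcases le_or_gt p P with h | h
    · exact Finset.single_le_sum hterm (Finset.mem_range.2 (Nat.lt_succ_of_le h))
    · exact le_trans (hstep p h.le)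
        (Finset.single_le_sum hterm (Finset.mem_range.2 (Nat.lt_succ_self P)))
  -- bddAbove of the log-range
  have hbddlog : ∀ y : ℝ,
      BddAbove (Set.range fun p : ℕ => Real.log ((l * |y|) ^ p / M p)) := by
    intro y
    obtain ⟨B, hB⟩ := hbdd (l * |y|) (by positivity)
    refine ⟨Real.log (max B 1), ?_⟩
    rintro _ ⟨p, rfl⟩
    rcases eq_or_lt_of_le (show (0:ℝ) ≤ (l * |y|) ^ p / M p by
      have := hMpos p; positivity) with h | h
    · show Real.log ((l * |y|) ^ p / M p) ≤ _
      rw [← h, Real.log_zero]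
      exact Real.log_nonneg (le_max_right _ _)
    · exact Real.log_le_log h (le_trans (hB p) (le_max_left _ _))

  set S : ℝ → ℝ := fun y => ⨆ p : ℕ, Real.log ((l * |y|) ^ p / M p) with hSdef
  have hS0 : ∀ y, 0 ≤ S y := by
    intro y
    have h := le_ciSup (hbddlog y) 0
    simpa [hM0] using h
  have hgeq : ∀ y, g y = α * S y + β := fun y => by rw [hg]
  have hgβ : ∀ y, β ≤ g y := fun y => by
    have := mul_nonneg hα.le (hS0 y); rw [hgeq]; linarith
  have hgpos : ∀ y, 0 < g y := fun y => lt_of_lt_of_le hβ (hgβ y)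
  -- monotonicity on [0, ∞)
  have gmono : ∀ a b : ℝ, 0 ≤ a → a ≤ b → g a ≤ g b := by
    intro a b ha hab
    rw [hgeq, hgeq]
    have hSab : S a ≤ S b := by
      rcases eq_or_lt_of_le ha with h | h
      · -- a = 0 : every term is 0
        refine ciSup_le fun p => ?_
        rw [← h, abs_zero, mul_zero]
        refine le_trans ?_ (hS0 b)
        match p with
        | 0 => simp [hM0]
        | (p+1) => simp
      · refine ciSup_le fun p => le_trans ?_ (le_ciSup (hbddlog b) p)
        have hb0 : 0 < b := lt_of_lt_of_le h hab
        rw [_root_.abs_of_nonneg (le_of_lt h), _root_.abs_of_nonneg hb0.le]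
        have hpos : 0 < (l * a) ^ p / M p := by have := hMpos p; positivity
        refine Real.log_le_log hpos ?_
        have hMp := hMpos p
        gcongr
    nlinarith [hSab]
  -- extensions of g : monotone on the right, antitone on the left
  set G : ℝ → ℝ := fun t => g (max t 0) with hGdef
  set G2 : ℝ → ℝ := fun t => g (min t 0) with hG2def
  have hG : Monotone G := fun a b hab =>
    gmono _ _ (le_max_right _ _) (max_le_max hab le_rfl)
  have hgabs : ∀ y : ℝ, g |y| = g y := by
    intro y; rw [hgeq, hgeq, hSdef]; simp [abs_abs]
  have hG2 : Antitone G2 := by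
    intro a b hab
    have h1 : min b 0 ≤ 0 := min_le_right _ _
    have h2 : min a 0 ≤ min b 0 := min_le_min hab le_rfl
    calc G2 b = g |min b 0| := (hgabs _).symm ▸ rfl
      _ ≤ g |min a 0| := by
          refine gmono _ _ (abs_nonneg _) ?_
          rw [abs_of_nonpos h1, abs_of_nonpos (le_trans h2 h1)]
          linarith
      _ = G2 a := hgabs _
  have hGpos : ∀ t, 0 < G t := fun t => hgpos _
  have hG2pos : ∀ t, 0 < G2 t := fun t => hgpos _
  have hGβ : ∀ t, β ≤ G t := fun t => hgβ _
  have hG2β : ∀ t, β ≤ G2 t := fun t => hgβ _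
  set φ : ℝ → ℝ := fun t => -(G t)⁻¹ with hφdef
  set ψ : ℝ → ℝ := fun t => (G2 t)⁻¹ with hψdef
  have hφmono : Monotone φ := by
    intro a b hab
    have := one_div_le_one_div_of_le (hGpos a) (hG hab)
    simp only [hφdef, one_div] at this ⊢
    linarith
  have hψmono : Monotone ψ := by
    intro a b hab
    have := one_div_le_one_div_of_le (hG2pos b) (hG2 hab)
    simp only [hψdef, one_div] at this ⊢
    linarith
  have hφlb : ∀ t, -β⁻¹ ≤ φ t := by
    intro t
    have := one_div_le_one_div_of_le hβ (hGβ t)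
    simp only [one_div] at this
    simp only [hφdef]; linarith
  have hφub : ∀ t, φ t ≤ 0 := fun t => by
    simp only [hφdef]
    exact neg_nonpos.2 (inv_nonneg.2 (hGpos t).le)
  have hψlb : ∀ t, (0:ℝ) ≤ ψ t := fun t => inv_nonneg.2 (hG2pos t).le
  have hψub : ∀ t, ψ t ≤ β⁻¹ := by
    intro t
    have := one_div_le_one_div_of_le hβ (hG2β t)
    simpa [one_div, hψdef] using this
  have Iφ : Integrable (deriv φ) := mono_deriv_integrable hφmono hφlb hφub
  have Iψ : Integrable (deriv ψ) := mono_deriv_integrable hψmono hψlb hψub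
  -- pointwise identity on the right half line
  have hright : ∀ y : ℝ, 0 < y → |deriv g y| / (g y) ^ 2 = |deriv φ y| := by
    intro y hy
    have hev : G =ᶠ[𝓝 y] g := by
      filter_upwards [Ioi_mem_nhds hy] with x hx
      simp only [hGdef, max_eq_left (le_of_lt (Set.mem_Ioi.mp hx))]
    have hevφ : φ =ᶠ[𝓝 y] fun x => -(g x)⁻¹ := by
      filter_upwards [hev] with x hx
      simp only [hφdef, hx]
    by_cases hd : DifferentiableAt ℝ g y
    · have hder : HasDerivAt (fun x => -(g x)⁻¹) (deriv g y / (g y) ^ 2) y := by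
        have h1 := (hd.hasDerivAt.inv (ne_of_gt (hgpos y))).neg
        rw [show deriv g y / g y ^ 2 = -(-deriv g y / g y ^ 2) by ring]
        exact h1
      have : deriv φ y = deriv g y / (g y) ^ 2 := by
        rw [hevφ.deriv_eq, hder.deriv]
      rw [this, abs_div, abs_of_pos (pow_pos (hgpos y) 2)]
    · have h1 : deriv g y = 0 := deriv_zero_of_not_differentiableAt hd
      have h2 : ¬ DifferentiableAt ℝ φ y := by
        intro hφd
        apply hd
        have hev2 : g =ᶠ[𝓝 y] fun x => -(φ x)⁻¹ := by
          filter_upwards [hev] with x hx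
          simp only [hφdef, hx, inv_neg, inv_inv, neg_neg]
        rw [hev2.differentiableAt_iff]
        have hφ0 : φ y ≠ 0 := by
          simp only [hφdef]
          exact neg_ne_zero.2 (inv_ne_zero (ne_of_gt (hGpos y)))
        exact (hφd.inv hφ0).neg
      have h3 : deriv φ y = 0 := deriv_zero_of_not_differentiableAt h2
      simp [h1, h3]
  -- pointwise identity on the left half line
  have hleft : ∀ y : ℝ, y < 0 → |deriv g y| / (g y) ^ 2 = |deriv ψ y| := by
    intro y hy
    have hev : G2 =ᶠ[𝓝 y] g := by
      filter_upwards [Iio_mem_nhds hy] with x hx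
      simp only [hG2def, min_eq_left (le_of_lt (Set.mem_Iio.mp hx))]
    have hevψ : ψ =ᶠ[𝓝 y] fun x => (g x)⁻¹ := by
      filter_upwards [hev] with x hx
      simp only [hψdef, hx]
    by_cases hd : DifferentiableAt ℝ g y
    · have hder : HasDerivAt (fun x => (g x)⁻¹) (-(deriv g y) / (g y) ^ 2) y :=
        hd.hasDerivAt.inv (ne_of_gt (hgpos y))
      have : deriv ψ y = -(deriv g y) / (g y) ^ 2 := by
        rw [hevψ.deriv_eq, hder.deriv]
      rw [this, abs_div, abs_of_pos (pow_pos (hgpos y) 2), abs_neg]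
    · have h1 : deriv g y = 0 := deriv_zero_of_not_differentiableAt hd
      have h2 : ¬ DifferentiableAt ℝ ψ y := by
        intro hψd
        apply hd
        have hev2 : g =ᶠ[𝓝 y] fun x => (ψ x)⁻¹ := by
          filter_upwards [hev] with x hx
          simp only [hψdef, hx, inv_inv]
        rw [hev2.differentiableAt_iff]
        have hψ0 : ψ y ≠ 0 := by
          simp only [hψdef]
          exact inv_ne_zero (ne_of_gt (hG2pos y))
        exact hψd.inv hψ0
      have h3 : deriv ψ y = 0 := deriv_zero_of_not_differentiableAt h2
      simp [h1, h3]
  -- norm computation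
  have hnorm : ∀ y : ℝ, ‖((g y : ℂ) + Complex.I * y)‖ ^ 2 = g y ^ 2 + y ^ 2 := by
    intro y
    rw [Complex.sq_norm, Complex.normSq_apply]
    simp
    ring
  have hfeq : (fun y : ℝ => Real.sqrt (1 + deriv g y ^ 2) / ‖((g y : ℂ) + Complex.I * y)‖ ^ 2)
      = fun y : ℝ => Real.sqrt (1 + deriv g y ^ 2) / (g y ^ 2 + y ^ 2) := by
    funext y; rw [hnorm y]
  rw [hfeq]
  -- measurability
  have hgm : Measurable g := by
    have h1 : Measurable fun y : ℝ => G |y| := hG.measurable.comp measurable_abs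
    have h2 : (fun y : ℝ => G |y|) = g := by
      funext y
      simp only [hGdef, max_eq_left (abs_nonneg y), hgabs y]
    rwa [h2] at h1
  have hmeas : Measurable fun y : ℝ => Real.sqrt (1 + deriv g y ^ 2) / (g y ^ 2 + y ^ 2) := by
    exact ((measurable_const.add ((measurable_deriv g).pow_const 2)).sqrt).div
      ((hgm.pow_const 2).add ((measurable_id.pow_const 2)))
  -- the dominating function
  set K : ℝ := max 1 (β ^ 2)⁻¹ with hKdef
  have hK1 : (1:ℝ) ≤ K := le_max_left _ _
  have hKβ : (1:ℝ) ≤ K * β ^ 2 := by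
    have h1 : (β ^ 2)⁻¹ ≤ K := le_max_right _ _
    have h2 : (0:ℝ) < β ^ 2 := by positivity
    calc (1:ℝ) = (β ^ 2)⁻¹ * β ^ 2 := by field_simp
      _ ≤ K * β ^ 2 := by gcongr
  have ID : Integrable (fun y : ℝ => K * (1 + y ^ 2)⁻¹ + |deriv φ y| + |deriv ψ y|) :=
    ((integrable_inv_one_add_sq.const_mul K).add Iφ.abs).add Iψ.abs
  refine ID.mono' hmeas.aestronglyMeasurable ?_
  have h0 : ∀ᵐ y : ℝ, y ≠ 0 := by simp [ae_iff, measure_singleton]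
  filter_upwards [h0] with y hy0
  have hgy := hgpos y
  have hgby := hgβ y
  have hden : 0 < g y ^ 2 + y ^ 2 := by positivity
  have hnn : 0 ≤ Real.sqrt (1 + deriv g y ^ 2) / (g y ^ 2 + y ^ 2) :=
    div_nonneg (Real.sqrt_nonneg _) hden.le
  rw [Real.norm_of_nonneg hnn]
  set d : ℝ := deriv g y with hd
  have hsq : Real.sqrt (1 + d ^ 2) ≤ 1 + |d| := by
    have h1 : (1:ℝ) + d ^ 2 ≤ (1 + |d|) ^ 2 := by nlinarith [abs_nonneg d, _root_.sq_abs d]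
    calc Real.sqrt (1 + d ^ 2) ≤ Real.sqrt ((1 + |d|) ^ 2) := Real.sqrt_le_sqrt h1
      _ = 1 + |d| := Real.sqrt_sq (by positivity)
  have step1 : Real.sqrt (1 + d ^ 2) / (g y ^ 2 + y ^ 2) ≤ (1 + |d|) / (g y ^ 2 + y ^ 2) := by
    gcongr
  have step2 : (1 + |d|) / (g y ^ 2 + y ^ 2)
      = 1 / (g y ^ 2 + y ^ 2) + |d| / (g y ^ 2 + y ^ 2) := by ring
  have step3 : 1 / (g y ^ 2 + y ^ 2) ≤ K * (1 + y ^ 2)⁻¹ := by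
    have h2 : (0:ℝ) < 1 + y ^ 2 := by positivity
    rw [← div_eq_mul_inv, div_le_div_iff₀ hden h2]
    have hK0 : (0:ℝ) ≤ K := le_trans zero_le_one hK1
    have hggb : β ^ 2 ≤ g y ^ 2 := by nlinarith
    nlinarith [mul_le_mul_of_nonneg_left hggb hK0,
      mul_nonneg (sub_nonneg.2 hK1) (sq_nonneg y), hKβ]
  have step4 : |d| / (g y ^ 2 + y ^ 2) ≤ |d| / g y ^ 2 := by
    apply div_le_div_of_nonneg_left (abs_nonneg d) (by positivity)
    nlinarith [sq_nonneg y]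
  have step5 : |d| / g y ^ 2 ≤ |deriv φ y| + |deriv ψ y| := by
    rcases lt_or_gt_of_ne hy0 with h | h
    · rw [hd, hleft y h]
      exact le_add_of_nonneg_left (abs_nonneg _)
    · rw [hd, hright y h]
      exact le_add_of_nonneg_right (abs_nonneg _)
  calc Real.sqrt (1 + d ^ 2) / (g y ^ 2 + y ^ 2)
      ≤ (1 + |d|) / (g y ^ 2 + y ^ 2) := step1
    _ = 1 / (g y ^ 2 + y ^ 2) + |d| / (g y ^ 2 + y ^ 2) := step2
    _ ≤ K * (1 + y ^ 2)⁻¹ + (|deriv φ y| + |deriv ψ y|) := by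
        exact add_le_add step3 (le_trans step4 step5)
    _ = K * (1 + y ^ 2)⁻¹ + |deriv φ y| + |deriv ψ y| := by ring
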